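/- Let θ_v^{f,2}(r) := arccos((r_v cos Θ_u − r_u cos Θ_v)/√(r_v² + r_u² + 2 r_v r_u cos Θ_w)) for r_v, r_u > 0 and Θ_v, Θ_u, Θ_w ∈ [0,π/2] with Θ_w the weight of the edge joining v and u. Then ∂(θ_v^{f,2}∘R)/∂x_u = ∂(θ_u^{f,2}∘R)/∂x_v = −∂(θ_v^{f,2}∘R)/∂x_v ≥ 0, where R(x)_w = e^{x_w}, with equality iff Θ_v = Θ_u = π/2. -/

import Mathlib

open Real

private lemma degAux_algebra (a b c rv ru Q N s t : ℝ)
    (hQdef : Q = rv ^ 2 + ru ^ 2 + 2 * rv * ru * c)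
    (hNdef : N = rv * a - ru * b) (hs : 0 < s) (ht : 0 < t) (hsq : s ^ 2 = Q) (hQ : 0 < Q) :
    (-(1 / (t / s))) * ((-b * s - N * ((2 * ru + 2 * rv * c) / (2 * s))) / s ^ 2)
      = rv * (rv * (b + a * c) + ru * (a + b * c)) / (Q * t) := by
  have key : b * Q + N * (ru + rv * c) = rv * (rv * (b + a * c) + ru * (a + b * c)) := by
    rw [hQdef, hNdef]; ring
  rw [← key]
  subst hsq
  field_simp
  ring

private lemma degAux_T {a b c rv ru : ℝ} (ha : 0 ≤ a) (ha1 : a ≤ 1) (hb : 0 ≤ b) (hb1 : b ≤ 1)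
    (hc : 0 ≤ c) (hrv : 0 < rv) (hru : 0 < ru) :
    0 < rv ^ 2 + ru ^ 2 + 2 * rv * ru * c - (rv * a - ru * b) ^ 2 := by
  nlinarith [mul_pos hrv hru, mul_nonneg (mul_nonneg hrv.le hru.le) hc,
    mul_nonneg ha hb, sq_nonneg (rv * a - ru * b),
    mul_nonneg (mul_nonneg hrv.le hru.le) (mul_nonneg ha hb),
    mul_nonneg (mul_nonneg hrv.le hrv.le) (mul_nonneg (sub_nonneg.2 ha1) (by linarith : (0:ℝ) ≤ 1 + a)),
    mul_nonneg (mul_nonneg hru.le hru.le) (mul_nonneg (sub_nonneg.2 hb1) (by linarith : (0:ℝ) ≤ 1 + b))]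

private lemma degAux_master {a b c rv ru : ℝ} (ha : 0 ≤ a) (ha1 : a ≤ 1) (hb : 0 ≤ b) (hb1 : b ≤ 1)
    (hc : 0 ≤ c) (hrv : 0 < rv) (hru : 0 < ru) :
    HasDerivAt (fun t => Real.arccos ((rv * a - t * b) / Real.sqrt (rv ^ 2 + t ^ 2 + 2 * rv * t * c)))
      (rv * (rv * (b + a * c) + ru * (a + b * c)) /
        ((rv ^ 2 + ru ^ 2 + 2 * rv * ru * c) *
          Real.sqrt (rv ^ 2 + ru ^ 2 + 2 * rv * ru * c - (rv * a - ru * b) ^ 2))) ru := by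
  have hQ : 0 < rv ^ 2 + ru ^ 2 + 2 * rv * ru * c := by
    nlinarith [mul_pos hrv hru, mul_nonneg (mul_nonneg hrv.le hru.le) hc]
  have hT : 0 < rv ^ 2 + ru ^ 2 + 2 * rv * ru * c - (rv * a - ru * b) ^ 2 :=
    degAux_T ha ha1 hb hb1 hc hrv hru
  set Q : ℝ := rv ^ 2 + ru ^ 2 + 2 * rv * ru * c with hQdef
  set N : ℝ := rv * a - ru * b with hNdef
  have hs : 0 < Real.sqrt Q := Real.sqrt_pos.mpr hQ
  have ht : 0 < Real.sqrt (Q - N ^ 2) := Real.sqrt_pos.mpr hT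
  have hsq : Real.sqrt Q ^ 2 = Q := Real.sq_sqrt hQ.le
  have hN : HasDerivAt (fun t : ℝ => rv * a - t * b) (-b) ru := by
    simpa using (HasDerivAt.const_sub (rv * a) ((hasDerivAt_id ru).mul_const b))
  have hQt : HasDerivAt (fun t : ℝ => rv ^ 2 + t ^ 2 + 2 * rv * t * c) (2 * ru + 2 * rv * c) ru := by
    have h1 : HasDerivAt (fun t : ℝ => t ^ 2) (2 * ru) ru := by
      simpa using (hasDerivAt_pow 2 ru)
    have h2 : HasDerivAt (fun t : ℝ => 2 * rv * t * c) (2 * rv * c) ru := by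
      simpa [mul_comm, mul_assoc, mul_left_comm] using
        (((hasDerivAt_id ru).const_mul (2 * rv)).mul_const c)
    exact ((h1.const_add (rv ^ 2)).add h2)
  have hD : HasDerivAt (fun t : ℝ => Real.sqrt (rv ^ 2 + t ^ 2 + 2 * rv * t * c))
      ((2 * ru + 2 * rv * c) / (2 * Real.sqrt Q)) ru := by
    have := hQt.sqrt (by rw [← hQdef]; exact hQ.ne')
    simpa [← hQdef] using this
  have hg : HasDerivAt (fun t : ℝ => (rv * a - t * b) / Real.sqrt (rv ^ 2 + t ^ 2 + 2 * rv * t * c))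
      ((-b * Real.sqrt Q - N * ((2 * ru + 2 * rv * c) / (2 * Real.sqrt Q))) / (Real.sqrt Q) ^ 2) ru := by
    have := hN.div hD hs.ne'
    exact this
  have hglt : (N / Real.sqrt Q) ^ 2 < 1 := by
    rw [div_pow, hsq, div_lt_one hQ]; linarith
  have h1 : N / Real.sqrt Q ≠ -1 := by intro h; rw [h] at hglt; norm_num at hglt
  have h2 : N / Real.sqrt Q ≠ 1 := by intro h; rw [h] at hglt; norm_num at hglt
  have hsqrt1 : Real.sqrt (1 - (N / Real.sqrt Q) ^ 2) = Real.sqrt (Q - N ^ 2) / Real.sqrt Q := by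
    rw [show (1 : ℝ) - (N / Real.sqrt Q) ^ 2 = (Q - N ^ 2) / Q by field_simp; rw [hsq]; ring,
      Real.sqrt_div hT.le]
  have hcomp := (Real.hasDerivAt_arccos h1 h2).comp ru hg
  rw [show (Real.arccos ∘ fun t : ℝ => (rv * a - t * b) / Real.sqrt (rv ^ 2 + t ^ 2 + 2 * rv * t * c))
      = fun t : ℝ => Real.arccos ((rv * a - t * b) / Real.sqrt (rv ^ 2 + t ^ 2 + 2 * rv * t * c))
      from rfl] at hcomp
  refine hcomp.congr_deriv (Eq.symm ?_)
  rw [hsqrt1]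
  exact (degAux_algebra a b c rv ru Q N (Real.sqrt Q) (Real.sqrt (Q - N ^ 2))
    hQdef hNdef hs ht hsq hQ).symm

private lemma degAux_master2 {a b c rv ru : ℝ} (ha : 0 ≤ a) (ha1 : a ≤ 1) (hb : 0 ≤ b) (hb1 : b ≤ 1)
    (hc : 0 ≤ c) (hrv : 0 < rv) (hru : 0 < ru) :
    HasDerivAt (fun t => Real.arccos ((t * a - ru * b) / Real.sqrt (t ^ 2 + ru ^ 2 + 2 * t * ru * c)))
      (-(ru * (rv * (b + a * c) + ru * (a + b * c)) /
        ((rv ^ 2 + ru ^ 2 + 2 * rv * ru * c) *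
          Real.sqrt (rv ^ 2 + ru ^ 2 + 2 * rv * ru * c - (rv * a - ru * b) ^ 2)))) rv := by
  have h := (degAux_master hb hb1 ha ha1 hc hru hrv).const_sub π
  have heq : (fun t => π - Real.arccos ((ru * b - t * a) / Real.sqrt (ru ^ 2 + t ^ 2 + 2 * ru * t * c)))
      = fun t => Real.arccos ((t * a - ru * b) / Real.sqrt (t ^ 2 + ru ^ 2 + 2 * t * ru * c)) := by
    funext t
    rw [show t ^ 2 + ru ^ 2 + 2 * t * ru * c = ru ^ 2 + t ^ 2 + 2 * ru * t * c from by ring,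
      show (t * a - ru * b) = -(ru * b - t * a) from by ring, neg_div, Real.arccos_neg]
  rw [heq] at h
  refine h.congr_deriv (Eq.symm ?_)
  rw [show ru ^ 2 + rv ^ 2 + 2 * ru * rv * c - (ru * b - rv * a) ^ 2
      = rv ^ 2 + ru ^ 2 + 2 * rv * ru * c - (rv * a - ru * b) ^ 2 from by ring,
    show ru ^ 2 + rv ^ 2 + 2 * ru * rv * c = rv ^ 2 + ru ^ 2 + 2 * rv * ru * c from by ring]
  ring

/-- The degenerate angle at the vertex `v` of a triangle with two finite
vertices `v, u` (radii `r_v, r_u`, weights `Θ_v` opposite `v`, `Θ_u` opposite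
`u`, `Θ_w` on the edge joining `v` and `u`) and one infinitesimal vertex. -/
noncomputable def degAngle (rv ru Θv Θu Θw : ℝ) : ℝ :=
  Real.arccos ((rv * Real.cos Θu - ru * Real.cos Θv) /
    Real.sqrt (rv ^ 2 + ru ^ 2 + 2 * rv * ru * Real.cos Θw))

/-- In logarithmic coordinates `x_v = log r_v`, the degenerate angle satisfies
`∂θ_v/∂x_u = ∂θ_u/∂x_v = −∂θ_v/∂x_v ≥ 0`, with equality iff
`Θ_v = Θ_u = π/2`. -/
theorem degAngle_log_derivatives
    (xv xu Θv Θu Θw : ℝ)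
    (hΘv : Θv ∈ Set.Icc 0 (π / 2)) (hΘu : Θu ∈ Set.Icc 0 (π / 2))
    (hΘw : Θw ∈ Set.Icc 0 (π / 2)) :
    deriv (fun y => degAngle (Real.exp xv) (Real.exp y) Θv Θu Θw) xu =
        deriv (fun y => degAngle (Real.exp xu) (Real.exp y) Θu Θv Θw) xv ∧
    deriv (fun y => degAngle (Real.exp xv) (Real.exp y) Θv Θu Θw) xu =
        -deriv (fun y => degAngle (Real.exp y) (Real.exp xu) Θv Θu Θw) xv ∧
    (0 ≤ deriv (fun y => degAngle (Real.exp xv) (Real.exp y) Θv Θu Θw) xu) ∧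
    (deriv (fun y => degAngle (Real.exp xv) (Real.exp y) Θv Θu Θw) xu = 0 ↔
      Θv = π / 2 ∧ Θu = π / 2) := by
  obtain ⟨hv0, hv2⟩ := hΘv
  obtain ⟨hu0, hu2⟩ := hΘu
  obtain ⟨hw0, hw2⟩ := hΘw
  have hpi := Real.pi_pos
  set a := Real.cos Θu with hadef
  set b := Real.cos Θv with hbdef
  set c := Real.cos Θw with hcdef
  have ha : 0 ≤ a := Real.cos_nonneg_of_mem_Icc ⟨by linarith, hu2⟩
  have ha1 : a ≤ 1 := Real.cos_le_one _
  have hb : 0 ≤ b := Real.cos_nonneg_of_mem_Icc ⟨by linarith, hv2⟩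
  have hb1 : b ≤ 1 := Real.cos_le_one _
  have hc : 0 ≤ c := Real.cos_nonneg_of_mem_Icc ⟨by linarith, hw2⟩
  set rv := Real.exp xv with hrvdef
  set ru := Real.exp xu with hrudef
  have hrv : 0 < rv := Real.exp_pos xv
  have hru : 0 < ru := Real.exp_pos xu
  have hQ : 0 < rv ^ 2 + ru ^ 2 + 2 * rv * ru * c := by
    nlinarith [mul_pos hrv hru, mul_nonneg (mul_nonneg hrv.le hru.le) hc]
  have hT := degAux_T ha ha1 hb hb1 hc hrv hru
  have ht : 0 < Real.sqrt (rv ^ 2 + ru ^ 2 + 2 * rv * ru * c - (rv * a - ru * b) ^ 2) :=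
    Real.sqrt_pos.mpr hT
  have h1 : HasDerivAt (fun y => degAngle rv (Real.exp y) Θv Θu Θw)
      (rv * (rv * (b + a * c) + ru * (a + b * c)) /
        ((rv ^ 2 + ru ^ 2 + 2 * rv * ru * c) *
          Real.sqrt (rv ^ 2 + ru ^ 2 + 2 * rv * ru * c - (rv * a - ru * b) ^ 2)) * ru) xu := by
    have := (degAux_master ha ha1 hb hb1 hc hrv hru).comp xu (Real.hasDerivAt_exp xu)
    simpa [degAngle, Function.comp_def] using this
  have h2 : HasDerivAt (fun y => degAngle ru (Real.exp y) Θu Θv Θw)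
      (ru * (ru * (a + b * c) + rv * (b + a * c)) /
        ((ru ^ 2 + rv ^ 2 + 2 * ru * rv * c) *
          Real.sqrt (ru ^ 2 + rv ^ 2 + 2 * ru * rv * c - (ru * b - rv * a) ^ 2)) * rv) xv := by
    have := (degAux_master hb hb1 ha ha1 hc hru hrv).comp xv (Real.hasDerivAt_exp xv)
    simpa [degAngle, Function.comp_def] using this
  have h3 : HasDerivAt (fun y => degAngle (Real.exp y) ru Θv Θu Θw)
      (-(ru * (rv * (b + a * c) + ru * (a + b * c)) /
        ((rv ^ 2 + ru ^ 2 + 2 * rv * ru * c) *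
          Real.sqrt (rv ^ 2 + ru ^ 2 + 2 * rv * ru * c - (rv * a - ru * b) ^ 2))) * rv) xv := by
    have := (degAux_master2 ha ha1 hb hb1 hc hrv hru).comp xv (Real.hasDerivAt_exp xv)
    simpa [degAngle, Function.comp_def] using this
  rw [h1.deriv, h2.deriv, h3.deriv]
  have hS : 0 ≤ rv * (b + a * c) + ru * (a + b * c) :=
    add_nonneg (mul_nonneg hrv.le (add_nonneg hb (mul_nonneg ha hc)))
      (mul_nonneg hru.le (add_nonneg ha (mul_nonneg hb hc)))
  refine ⟨?_, by ring, ?_, ?_⟩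
  · rw [show ru ^ 2 + rv ^ 2 + 2 * ru * rv * c = rv ^ 2 + ru ^ 2 + 2 * rv * ru * c from by ring,
      show (ru * b - rv * a) ^ 2 = (rv * a - ru * b) ^ 2 from by ring]
    ring
  · exact mul_nonneg (div_nonneg (mul_nonneg hrv.le hS)
      (mul_nonneg hQ.le (Real.sqrt_nonneg _))) hru.le
  · constructor
    · intro h
      have hden : (rv ^ 2 + ru ^ 2 + 2 * rv * ru * c) *
          Real.sqrt (rv ^ 2 + ru ^ 2 + 2 * rv * ru * c - (rv * a - ru * b) ^ 2) ≠ 0 :=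
        (mul_pos hQ ht).ne'
      have hnum : rv * (rv * (b + a * c) + ru * (a + b * c)) = 0 := by
        rcases mul_eq_zero.mp h with h' | h'
        · rcases div_eq_zero_iff.mp h' with h'' | h''
          · exact h''
          · exact absurd h'' hden
        · exact absurd h' hru.ne'
      have hS0 : rv * (b + a * c) + ru * (a + b * c) = 0 := by
        rcases mul_eq_zero.mp hnum with h' | h'
        · exact absurd h' hrv.ne'
        · exact h'
      have t1 : 0 ≤ rv * (b + a * c) := mul_nonneg hrv.le (add_nonneg hb (mul_nonneg ha hc))
      have t2 : 0 ≤ ru * (a + b * c) := mul_nonneg hru.le (add_nonneg ha (mul_nonneg hb hc))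
      have e1 : b + a * c = 0 := by
        have : rv * (b + a * c) = 0 := by linarith
        rcases mul_eq_zero.mp this with h' | h'
        · exact absurd h' hrv.ne'
        · exact h'
      have e2 : a + b * c = 0 := by
        have : ru * (a + b * c) = 0 := by linarith
        rcases mul_eq_zero.mp this with h' | h'
        · exact absurd h' hru.ne'
        · exact h'
      have hb0 : b = 0 := by linarith [mul_nonneg ha hc]
      have ha0 : a = 0 := by linarith [mul_nonneg hb hc]
      constructor
      · by_contra hne
        have hlt : Θv < π / 2 := lt_of_le_of_ne hv2 hne
        have : 0 < Real.cos Θv := Real.cos_pos_of_mem_Ioo ⟨by linarith, hlt⟩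
        rw [← hbdef] at this; linarith
      · by_contra hne
        have hlt : Θu < π / 2 := lt_of_le_of_ne hu2 hne
        have : 0 < Real.cos Θu := Real.cos_pos_of_mem_Ioo ⟨by linarith, hlt⟩
        rw [← hadef] at this; linarith
    · rintro ⟨ev, eu⟩
      have hb0 : b = 0 := by rw [hbdef, ev, Real.cos_pi_div_two]
      have ha0 : a = 0 := by rw [hadef, eu, Real.cos_pi_div_two]
      rw [ha0, hb0]
      simp
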